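/- Let T be a tournament on n = 2^m vertices and S a subset of the arcs of T. There is a seeding (a bijection from players to leaf positions of a balanced binary tree) such that in the resulting single-elimination tournament every match in S is played, if and only if T has a spanning binomial arborescence H whose arc set contains S. -/

import Mathlib

universe u

/-- A single-elimination bracket: a full binary tree with players at the leaves. -/
inductive SEBracket (V : Type u) where
  | leaf : V → SEBracket V
  | node : SEBracket V → SEBracket V → SEBracket V

namespace SEBracket

variable {V : Type*}

/-- The winner of the single-elimination tournament given by a bracket,
where `A a b` means `a` beats `b`. -/
def winner (A : V → V → Prop) [DecidableRel A] : SEBracket V → V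
  | .leaf v => v
  | .node l r =>
    let a := winner A l
    let b := winner A r
    if A a b then a else b

/-- The set of (winner, loser) pairs of the matches played in the
single-elimination tournament given by a bracket. -/
def played [DecidableEq V] (A : V → V → Prop) [DecidableRel A] : SEBracket V → Finset (V × V)
  | .leaf _ => ∅
  | .node l r =>
    let a := winner A l
    let b := winner A r
    insert (if A a b then (a, b) else (b, a)) (played A l ∪ played A r)

/-- The multiset of players placed at the leaves of a bracket. -/
def players : SEBracket V → Multiset V
  | .leaf v => {v}
  | .node l r => players l + players r

/-- A bracket is balanced of depth `n` if all leaves are at depth exactly `n`. -/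
def balanced : SEBracket V → ℕ → Prop
  | .leaf _, n => n = 0
  | .node l r, n => ∃ m, n = m + 1 ∧ balanced l m ∧ balanced r m

end SEBracket

variable {V : Type*} [DecidableEq V]

/-- A binomial arborescence over relation `A`, recorded with its vertex set,
its arc set, its root and its height. -/
inductive IsBAE (A : V → V → Prop) : Finset V → Finset (V × V) → V → ℕ → Prop
  | single (a : V) : IsBAE A {a} ∅ a 0
  | join {s t : Finset V} {E F : Finset (V × V)} {a b : V} {i : ℕ} :
      IsBAE A s E a i → IsBAE A t F b i → Disjoint s t → A a b →
      IsBAE A (s ∪ t) (insert (a, b) (E ∪ F)) a (i + 1)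

/-- Classical filter on a finset (no decidability assumptions needed). -/
noncomputable def cfilter {α : Type*} (p : α → Prop) (s : Finset α) : Finset α :=
  @Finset.filter _ p (fun _ => Classical.dec _) s

/-- The descendants (inside ambient vertex set `s`) of `x` in the digraph with arc set `E`:
vertices reachable from `x`, including `x` itself (when `x ∈ s`). -/
noncomputable def desc (s : Finset V) (E : Finset (V × V)) (x : V) : Finset V :=
  cfilter (fun y => Relation.ReflTransGen (fun a b => (a, b) ∈ E) x y) s

/-- The height `α_H(x)` of a vertex: log base 2 of its number of descendants. -/
noncomputable def hgt (s : Finset V) (E : Finset (V × V)) (x : V) : ℕ :=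
  Nat.log 2 (desc s E x).card

/-- The arcs of `E` lying within the subtree of descendants of `x`. -/
noncomputable def subArcs (s : Finset V) (E : Finset (V × V)) (x : V) : Finset (V × V) :=
  cfilter (fun e => e.1 ∈ desc s E x ∧ e.2 ∈ desc s E x) E


lemma SEBracket.winner_mem (A : V → V → Prop) [DecidableRel A] :
    ∀ B : SEBracket V, B.winner A ∈ B.players
  | .leaf v => by simp [SEBracket.winner, SEBracket.players]
  | .node l r => by
    simp only [SEBracket.winner, SEBracket.players, Multiset.mem_add]
    split
    · exact Or.inl (winner_mem A l)
    · exact Or.inr (winner_mem A r)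

lemma SEBracket.toBAE (A : V → V → Prop) [DecidableRel A]
    (hasym : ∀ a b : V, A a b → ¬ A b a)
    (htotal : ∀ a b : V, a ≠ b → A a b ∨ A b a) :
    ∀ (B : SEBracket V) (n : ℕ), B.balanced n → B.players.Nodup →
      IsBAE A B.players.toFinset (B.played A) (B.winner A) n
  | .leaf v, n, hb, _ => by
    obtain rfl : n = 0 := hb
    simpa [SEBracket.players, SEBracket.played, SEBracket.winner] using IsBAE.single (A := A) v
  | .node l r, n, hb, hnd => by
    obtain ⟨k, rfl, hl, hr⟩ := hb
    rw [SEBracket.players, Multiset.nodup_add] at hnd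
    obtain ⟨ndl, ndr, hdisj⟩ := hnd
    have ihl := toBAE A hasym htotal l k hl ndl
    have ihr := toBAE A hasym htotal r k hr ndr
    set a := l.winner A with ha
    set b := r.winner A with hb'
    have hne : a ≠ b := by
      intro h
      have hbmem : b ∈ r.players := r.winner_mem A
      rw [← h] at hbmem
      exact (Multiset.disjoint_left.mp hdisj (l.winner_mem A)) hbmem
    have hdisjF : Disjoint l.players.toFinset r.players.toFinset := by
      rw [Finset.disjoint_left]
      intro x hx hx'
      exact Multiset.disjoint_left.mp hdisj (Multiset.mem_toFinset.mp hx)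
        (Multiset.mem_toFinset.mp hx')
    simp only [SEBracket.players, SEBracket.played, SEBracket.winner, Multiset.toFinset_add]
    by_cases hab : A a b
    · simpa [hab, ← ha, ← hb'] using IsBAE.join ihl ihr hdisjF hab
    · have hba : A b a := ((htotal a b hne).resolve_left hab)
      have := IsBAE.join ihr ihl hdisjF.symm hba
      rw [Finset.union_comm r.players.toFinset, Finset.union_comm (r.played A)] at this
      simpa [hab, ← ha, ← hb'] using this

lemma IsBAE.toBracket {A : V → V → Prop} [DecidableRel A]
    {s : Finset V} {E : Finset (V × V)} {r : V} {n : ℕ}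
    (h : IsBAE A s E r n) :
    ∃ B : SEBracket V, B.balanced n ∧ B.players = s.val ∧ B.played A = E ∧
      B.winner A = r := by
  induction h with
  | single a => exact ⟨.leaf a, rfl, rfl, rfl, rfl⟩
  | @join s t E F a b i hl hr hdisj hab ihl ihr =>
    obtain ⟨Bl, bl, pl, gl, wl⟩ := ihl
    obtain ⟨Br, br, pr, gr, wr⟩ := ihr
    refine ⟨.node Bl Br, ⟨i, rfl, bl, br⟩, ?_, ?_, ?_⟩
    · rw [← Finset.disjUnion_eq_union s t hdisj]
      simp [SEBracket.players, pl, pr, Finset.disjUnion]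
    · simp [SEBracket.played, SEBracket.winner, wl, wr, hab, gl, gr]
    · simp [SEBracket.winner, wl, wr, hab]

/-- For a tournament `T` (relation `A`) on `2 ^ m` vertices and a set `S` of arcs of `T`,
there is a seeding (a balanced bracket with every player at exactly one leaf) whose
single-elimination tournament plays every match of `S`, iff `T` has a spanning binomial
arborescence whose arc set contains `S`. -/
theorem seeding_iff_sba [Fintype V] (A : V → V → Prop) [DecidableRel A]
    (hasym : ∀ a b : V, A a b → ¬ A b a)
    (htotal : ∀ a b : V, a ≠ b → A a b ∨ A b a)
    (m : ℕ) (hcard : Fintype.card V = 2 ^ m)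
    (S : Finset (V × V)) (hS : ∀ e ∈ S, A e.1 e.2) :
    (∃ B : SEBracket V, B.balanced m ∧ B.players = Finset.univ.val ∧ S ⊆ B.played A) ↔
    (∃ (E : Finset (V × V)) (r : V), IsBAE A Finset.univ E r m ∧ S ⊆ E) := by
  constructor
  · rintro ⟨B, hb, hp, hs⟩
    refine ⟨B.played A, B.winner A, ?_, hs⟩
    have hnd : B.players.Nodup := by rw [hp]; exact Finset.univ.nodup
    have := B.toBAE A hasym htotal m hb hnd
    rwa [hp, Finset.val_toFinset] at this
  · rintro ⟨E, r, h, hSE⟩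
    obtain ⟨B, hb, hp, hg, -⟩ := h.toBracket
    exact ⟨B, hb, hp, hg ▸ hSE⟩
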